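/- Let G₁ and G₂ be perfect groups such that every central extension of G₁ splits and every central extension of G₂ splits. Then every central extension of G₁ × G₂ splits. -/

import Mathlib

/-- A homomorphism from a perfect group to a commutative group is trivial. -/
theorem aux_perfect_hom_triv {G A : Type*} [Group G] [CommGroup A]
    (h : commutator G = ⊤) (f : G →* A) (x : G) : f x = 1 := by
  have hle : (⊤ : Subgroup G) ≤ f.ker := by
    rw [← h, commutator, Subgroup.commutator_le]
    intro g _ k _
    rw [MonoidHom.mem_ker, commutatorElement_def]
    simp only [map_mul, map_inv]
    rw [mul_comm (f g) (f k)]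
    group
  simpa [MonoidHom.mem_ker] using hle (Subgroup.mem_top x)

/-- If `G₁` and `G₂` are perfect groups all of whose central extensions split,
then every central extension of `G₁ × G₂` splits. -/
theorem stmt_0 {G₁ G₂ : Type} [Group G₁] [Group G₂]
    (hperf₁ : commutator G₁ = ⊤) (hperf₂ : commutator G₂ = ⊤)
    (hsplit₁ : ∀ (E : Type) [Group E] (π : E →* G₁), Function.Surjective π →
      π.ker ≤ Subgroup.center E → ∃ s : G₁ →* E, π.comp s = MonoidHom.id G₁)
    (hsplit₂ : ∀ (E : Type) [Group E] (π : E →* G₂), Function.Surjective π →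
      π.ker ≤ Subgroup.center E → ∃ s : G₂ →* E, π.comp s = MonoidHom.id G₂) :
    ∀ (E : Type) [Group E] (π : E →* (G₁ × G₂)), Function.Surjective π →
      π.ker ≤ Subgroup.center E →
      ∃ s : (G₁ × G₂) →* E, π.comp s = MonoidHom.id (G₁ × G₂) := by
  intro E _ π hsurj hcen
  set E₁ : Subgroup E := ((MonoidHom.snd G₁ G₂).comp π).ker with hE₁
  set E₂ : Subgroup E := ((MonoidHom.fst G₁ G₂).comp π).ker with hE₂
  set ρ₁ : E₁ →* G₁ := ((MonoidHom.fst G₁ G₂).comp π).comp E₁.subtype with hρ₁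
  set ρ₂ : E₂ →* G₂ := ((MonoidHom.snd G₁ G₂).comp π).comp E₂.subtype with hρ₂
  have hsur₁ : Function.Surjective ρ₁ := by
    intro g
    obtain ⟨e, he⟩ := hsurj (g, 1)
    refine ⟨⟨e, ?_⟩, ?_⟩
    · simp [hE₁, MonoidHom.mem_ker, he]
    · simp [hρ₁, he]
  have hsur₂ : Function.Surjective ρ₂ := by
    intro g
    obtain ⟨e, he⟩ := hsurj (1, g)
    refine ⟨⟨e, ?_⟩, ?_⟩
    · simp [hE₂, MonoidHom.mem_ker, he]
    · simp [hρ₂, he]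
  have hker₁ : ρ₁.ker ≤ Subgroup.center E₁ := by
    intro x hx
    have hx1 : x.1 ∈ π.ker := by
      have h2 : (π x.1).2 = 1 := x.2
      have h1 : (π x.1).1 = 1 := hx
      rw [MonoidHom.mem_ker, Prod.ext_iff]
      exact ⟨h1, h2⟩
    have hc := Subgroup.mem_center_iff.mp (hcen hx1)
    rw [Subgroup.mem_center_iff]
    intro g
    exact Subtype.ext (hc g.1)
  have hker₂ : ρ₂.ker ≤ Subgroup.center E₂ := by
    intro x hx
    have hx1 : x.1 ∈ π.ker := by
      have h1 : (π x.1).1 = 1 := x.2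
      have h2 : (π x.1).2 = 1 := hx
      rw [MonoidHom.mem_ker, Prod.ext_iff]
      exact ⟨h1, h2⟩
    have hc := Subgroup.mem_center_iff.mp (hcen hx1)
    rw [Subgroup.mem_center_iff]
    intro g
    exact Subtype.ext (hc g.1)
  obtain ⟨s₁, hs₁⟩ := hsplit₁ E₁ ρ₁ hsur₁ hker₁
  obtain ⟨s₂, hs₂⟩ := hsplit₂ E₂ ρ₂ hsur₂ hker₂
  set t₁ : G₁ →* E := E₁.subtype.comp s₁ with ht₁
  set t₂ : G₂ →* E := E₂.subtype.comp s₂ with ht₂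
  have hπt₁ : ∀ a, π (t₁ a) = (a, 1) := by
    intro a
    have h1 : (π (t₁ a)).1 = a := DFunLike.congr_fun hs₁ a
    have h2 : (π (t₁ a)).2 = 1 := (s₁ a).2
    exact Prod.ext h1 h2
  have hπt₂ : ∀ b, π (t₂ b) = (1, b) := by
    intro b
    have h2 : (π (t₂ b)).2 = b := DFunLike.congr_fun hs₂ b
    have h1 : (π (t₂ b)).1 = 1 := (s₂ b).2
    exact Prod.ext h1 h2
  -- the commutator of the two sections lands in the center
  have hc : ∀ (a : G₁) (b : G₂),
      t₁ a * t₂ b * (t₁ a)⁻¹ * (t₂ b)⁻¹ ∈ Subgroup.center E := by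
    intro a b
    apply hcen
    rw [MonoidHom.mem_ker]
    simp [hπt₁, hπt₂, Prod.ext_iff]
  have hcomm : ∀ (a : G₁) (b : G₂), Commute (t₁ a) (t₂ b) := by
    intro a b
    have key : t₁ a * t₂ b * (t₁ a)⁻¹ * (t₂ b)⁻¹ = 1 := by
      set φ : G₁ →* Subgroup.center E :=
        { toFun := fun a => ⟨t₁ a * t₂ b * (t₁ a)⁻¹ * (t₂ b)⁻¹, hc a b⟩
          map_one' := by
            ext
            simp
          map_mul' := by
            intro a a'
            ext
            simp only [MulMemClass.coe_mul, map_mul, mul_inv_rev]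
            have hz := Subgroup.mem_center_iff.mp (hc a' b)
            have h1 := hz (t₁ a)
            have h2 := hz (t₁ a * t₂ b * (t₁ a)⁻¹ * (t₂ b)⁻¹)
            have e1 : t₁ a * t₁ a' * t₂ b * ((t₁ a')⁻¹ * (t₁ a)⁻¹) * (t₂ b)⁻¹
                = t₁ a * (t₁ a' * t₂ b * (t₁ a')⁻¹ * (t₂ b)⁻¹) * (t₂ b * (t₁ a)⁻¹ * (t₂ b)⁻¹) := by
              group
            rw [e1, h1, h2]
            group }
      have := open IsMulCommutative in aux_perfect_hom_triv (A := Subgroup.center E) hperf₁ φ a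
      exact congrArg Subtype.val this
    have : t₁ a * t₂ b = t₂ b * t₁ a := by
      have := mul_eq_one_iff_eq_inv.mp key
      calc t₁ a * t₂ b = (t₁ a * t₂ b * (t₁ a)⁻¹ * (t₂ b)⁻¹) * (t₂ b * t₁ a) := by group
        _ = t₂ b * t₁ a := by rw [key]; group
    exact this
  refine ⟨{ toFun := fun p => t₁ p.1 * t₂ p.2
            map_one' := by simp
            map_mul' := ?_ }, ?_⟩
  · intro p q
    simp only [Prod.fst_mul, Prod.snd_mul, map_mul]
    calc t₁ p.1 * t₁ q.1 * (t₂ p.2 * t₂ q.2)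
        = t₁ p.1 * (t₁ q.1 * t₂ p.2) * t₂ q.2 := by group
      _ = t₁ p.1 * (t₂ p.2 * t₁ q.1) * t₂ q.2 := by rw [(hcomm q.1 p.2).eq]
      _ = t₁ p.1 * t₂ p.2 * (t₁ q.1 * t₂ q.2) := by group
  · apply MonoidHom.ext
    intro p
    show π (t₁ p.1 * t₂ p.2) = p
    rw [map_mul, hπt₁, hπt₂]
    simp [Prod.ext_iff]
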